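/- arXiv:1010.4020 — 2 statements merged into one kernel-verified Lean document; each statement's English description precedes it below -/
import Mathlib

section
/- Abstract propositional version of Theorem 2: Let Prov : Prop-formulas → Prop be a provability predicate on a Boolean algebra (or on Prop via a monotone, modus-ponens-closed operator). Suppose: (i) Prov is closed under modus ponens and contains all classical tautologies; (ii) Prov((c → a i) → p i) for all i in a finite nonempty type I (axiom COb with consistency proposition c); (iii) ¬ Prov(⋀_{i∈I} p i) follows from consistency via Im; (iv) ¬ Prov c (Gödel hypothesis); (v) Prov is consistent (¬ Prov ⊥). Then there exists i ∈ I with ¬ Prov (p i) and ¬ Prov (¬ p i). -/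
/-- Propositional formulas over atoms `c`, `a i`, `p i` (i in an index type). -/
inductive Fml (I : Type) : Type
  | c : Fml I
  | a : I → Fml I
  | p : I → Fml I
  | bot : Fml I
  | imp : Fml I → Fml I → Fml I
  | and : Fml I → Fml I → Fml I

namespace Fml

/-- Negation. -/
def neg {I : Type} (f : Fml I) : Fml I := Fml.imp f Fml.bot

/-- Evaluation of a formula under a valuation of the atoms. -/
def eval {I : Type} (vc : Prop) (va vp : I → Prop) : Fml I → Prop
  | Fml.c => vc
  | Fml.a i => va i
  | Fml.p i => vp i
  | Fml.bot => False
  | Fml.imp f g => eval vc va vp f → eval vc va vp g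
  | Fml.and f g => eval vc va vp f ∧ eval vc va vp g

/-- Classical tautology: true under every valuation. -/
def Taut {I : Type} (f : Fml I) : Prop :=
  ∀ (vc : Prop) (va vp : I → Prop), eval vc va vp f

/-- Conjunction ⋀_{i ∈ I} p i over the finite index type I. -/
noncomputable def conjP (I : Type) [Fintype I] : Fml I :=
  (Finset.univ : Finset I).toList.foldr (fun i acc => Fml.and (Fml.p i) acc)
    (Fml.imp Fml.bot Fml.bot)

end Fml

/-- Abstract propositional version of Theorem 2: if `Prov` contains all
classical tautologies and is closed under modus ponens, contains all the COb
axioms `(c → a i) → p i`, does not prove ⋀_i p i (Im), does not prove `c`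
(Gödel), and is consistent, then some `p i` is undetermined. -/
theorem abstract_theorem_two (I : Type) [Fintype I] [Nonempty I]
    (Prov : Set (Fml I))
    (htaut : ∀ f : Fml I, Fml.Taut f → f ∈ Prov)
    (hmp : ∀ f g : Fml I, Fml.imp f g ∈ Prov → f ∈ Prov → g ∈ Prov)
    (hCOb : ∀ i : I, Fml.imp (Fml.imp Fml.c (Fml.a i)) (Fml.p i) ∈ Prov)
    (hIm : Fml.conjP I ∉ Prov)
    (hGodel : Fml.c ∉ Prov)
    (hcons : Fml.bot ∉ Prov) :
    ∃ i : I, Fml.p i ∉ Prov ∧ Fml.neg (Fml.p i) ∉ Prov := by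
  by_contra h
  push_neg at h
  -- Step 1: not all p i are provable, else conjP would be provable.
  have hconj : ∀ (l : List I), (∀ i : I, Fml.p i ∈ Prov) →
      l.foldr (fun i acc => Fml.and (Fml.p i) acc) (Fml.imp Fml.bot Fml.bot) ∈ Prov := by
    intro l hall
    induction l with
    | nil => exact htaut _ (fun vc va vp => id)
    | cons i t ih =>
      have h1 : Fml.imp (Fml.p i) (Fml.imp
          (t.foldr (fun i acc => Fml.and (Fml.p i) acc) (Fml.imp Fml.bot Fml.bot))
          (Fml.and (Fml.p i) (t.foldr (fun i acc => Fml.and (Fml.p i) acc)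
            (Fml.imp Fml.bot Fml.bot)))) ∈ Prov :=
        htaut _ (fun vc va vp hp hq => ⟨hp, hq⟩)
      exact hmp _ _ (hmp _ _ h1 (hall i)) ih
  have hnotall : ¬ ∀ i : I, Fml.p i ∈ Prov := by
    intro hall
    exact hIm (hconj _ hall)
  push_neg at hnotall
  obtain ⟨i, hi⟩ := hnotall
  have hnegp : Fml.neg (Fml.p i) ∈ Prov := h i hi
  -- Step 2: from COb and ¬p i, derive c, contradicting Gödel.
  have htt : Fml.imp (Fml.imp (Fml.imp Fml.c (Fml.a i)) (Fml.p i))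
      (Fml.imp (Fml.neg (Fml.p i)) Fml.c) ∈ Prov := by
    apply htaut
    intro vc va vp h1 h2
    by_contra hc
    exact h2 (h1 (fun hcc => absurd hcc hc))
  exact hGodel (hmp _ _ (hmp _ _ htt (hCOb i)) hnegp)
end

section
/- If a theory F' proves COb := ∀t ∀i ((Cons → A(t,i)) → P(t,i)) and also proves ¬P(t,i) for some fixed t, i, then F' ⊢ Cons; hence, if additionally F' satisfies Gödel's second incompleteness theorem with respect to the sentence Cons (consistent F' implies F' ⊬ Cons) and F' is consistent, then F' ⊬ ¬P(t,i) for every t, i. -/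
/-- If F' proves COb then provability of ¬P(t,i) yields F' ⊢ Cons; hence under
Gödel's second incompleteness property for Cons, a consistent F' proves no
¬P(t,i). -/
theorem no_provably_false_observations (T I : Type)
    (A P : T → I → Prop) (Cons : Prop)
    (Pr : Prop → Prop)
    (hmp : ∀ p q : Prop, Pr (p → q) → Pr p → Pr q)
    (htaut : ∀ p : Prop, p → Pr p)
    (hCOb : Pr (∀ t i, (Cons → A t i) → P t i)) :
    (∀ t i, Pr (¬ P t i) → Pr Cons) ∧
      ((¬ Pr False → ¬ Pr Cons) → ¬ Pr False → ∀ t i, ¬ Pr (¬ P t i)) := by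
  have key : ∀ t i, Pr (¬ P t i) → Pr Cons := by
    intro t i hnp
    have htlem : (∀ t i, (Cons → A t i) → P t i) → ¬ P t i → Cons := by
      intro h hn
      by_contra hc
      exact hn (h t i (fun c => absurd c hc))
    exact hmp _ _ (hmp _ _ (htaut _ htlem) hCOb) hnp
  refine ⟨key, fun hG hcons t i hnp => ?_⟩
  exact hG hcons (key t i hnp)
end
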